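/- For n ∈ ℕ₀, the B-spline of degree n satisfies β₊^{(n)} = (1/n!) ∑_{k=0}^{n+1} binom(n+1,k) (-1)^k ϱ_n(· - k), where ϱ_n(x) = (max(x,0))^n for n ≥ 1 and ϱ_0 = 1_{[0,∞)}, and β₊^{(n)} is the (n+1)-fold convolution of the indicator 1_{[0,1)} with itself. -/

import Mathlib

open MeasureTheory

/-- `ϱ_n` for `n ≥ 1` is `x ↦ (max(x,0))^n`; `ϱ₀` is the Heaviside function `1_{[0,∞)}`. -/
noncomputable def rho (n : ℕ) (x : ℝ) : ℝ :=
  if n = 0 then (if 0 ≤ x then 1 else 0) else (max x 0) ^ n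

/-- The B-spline of degree `n`: the `(n+1)`-fold convolution of `1_{[0,1)}` with itself. -/
noncomputable def bspline : ℕ → ℝ → ℝ
  | 0 => fun x => if x ∈ Set.Ico (0:ℝ) 1 then 1 else 0
  | (n+1) => fun x => ∫ t : ℝ, bspline n t * (if (x - t) ∈ Set.Ico (0:ℝ) 1 then 1 else 0)

lemma rho_of_nonneg (n : ℕ) {x : ℝ} (hx : 0 ≤ x) : rho n x = x ^ n := by
  unfold rho
  split
  · next h => subst h; simp [hx]
  · rw [max_eq_left hx]

lemma rho_of_neg (n : ℕ) {x : ℝ} (hx : x < 0) : rho n x = 0 := by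
  unfold rho
  split
  · simp [not_le.mpr hx]
  · next h => rw [max_eq_right hx.le, zero_pow h]

lemma monotone_rho (n : ℕ) : Monotone (rho n) := by
  intro a b hab
  rcases eq_or_ne n 0 with h | h
  · subst h
    simp only [rho, if_pos rfl]
    split_ifs <;> norm_num <;> linarith
  · simp only [rho, if_neg h]
    exact pow_le_pow_left₀ (le_max_right a 0) (max_le_max hab le_rfl) n

lemma rho_succ_eq (n : ℕ) (y : ℝ) : rho (n+1) y = max y 0 ^ (n+1) := by
  simp [rho]

lemma integral_rho (n : ℕ) (c a b : ℝ) (hab : a ≤ b) :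
    ∫ t in a..b, rho n (t - c) = (rho (n+1) (b - c) - rho (n+1) (a - c)) / (n + 1) := by
  set F : ℝ → ℝ := fun t => max (t - c) 0 ^ (n+1) / (n+1) with hF
  have hmono : Monotone (fun t : ℝ => rho n (t - c)) :=
    (monotone_rho n).comp (fun u v h => sub_le_sub_right h _)
  have hint : IntervalIntegrable (fun t => rho n (t - c)) volume a b :=
    hmono.intervalIntegrable
  have hcont : Continuous F := by fun_prop
  have key : ∫ t in a..b, rho n (t - c) = F b - F a := by
    apply intervalIntegral.integral_eq_sub_of_hasDeriv_right_of_le hab hcont.continuousOn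
    · intro t _
      rcases lt_or_ge t c with h | h
      · have hev : F =ᶠ[nhds t] fun _ => 0 := by
          filter_upwards [Iio_mem_nhds h] with s hs
          have hsc : s - c ≤ 0 := by simp only [Set.mem_Iio] at hs; linarith
          simp [hF, max_eq_right hsc, zero_pow (Nat.succ_ne_zero n)]
        have hd : HasDerivAt F 0 t := (hasDerivAt_const t (0:ℝ)).congr_of_eventuallyEq hev
        rw [rho_of_neg n (by linarith)]
        exact hd.hasDerivWithinAt
      · have hG : HasDerivAt (fun s : ℝ => (s - c)^(n+1) / ((n:ℝ)+1)) ((t - c)^n) t := by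
          have h1 : HasDerivAt (fun s : ℝ => s - c) 1 t := (hasDerivAt_id t).sub_const c
          have h2 := (h1.pow (n+1)).div_const ((n:ℝ)+1)
          refine h2.congr_deriv ?_
          have hne : ((n:ℝ)+1) ≠ 0 := by positivity
          rw [Nat.add_sub_cancel]
          field_simp
          push_cast; ring
        have heq : ∀ s ∈ Set.Ioi t, F s = (s - c)^(n+1) / ((n:ℝ)+1) := by
          intro s hs
          have : c ≤ s := le_trans h (le_of_lt hs)
          simp [hF, max_eq_left (by linarith : (0:ℝ) ≤ s - c)]
        have heqt : F t = (t - c)^(n+1) / ((n:ℝ)+1) := by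
          simp [hF, max_eq_left (by linarith : (0:ℝ) ≤ t - c)]
        rw [rho_of_nonneg n (by linarith)]
        exact (hG.hasDerivWithinAt).congr heq heqt
    · exact hint
  rw [key, rho_succ_eq, rho_succ_eq]
  simp only [hF]
  push_cast
  ring

lemma sum_pascal (m : ℕ) (f : ℕ → ℝ) :
    ∑ k ∈ Finset.range (m + 2), (-1:ℝ)^k * ((m+1).choose k : ℝ) * (f k - f (k+1))
      = ∑ k ∈ Finset.range (m + 3), (-1:ℝ)^k * ((m+2).choose k : ℝ) * f k := by
  have hc0 : (((m+1).choose (m+2) : ℕ) : ℝ) = 0 := by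
    norm_cast
    exact Nat.choose_eq_zero_of_lt (by omega)
  set a : ℕ → ℝ := fun k => (-1:ℝ)^k * ((m+1).choose k : ℝ) with ha
  have hsplit : ∑ k ∈ Finset.range (m+2), (-1:ℝ)^k * ((m+1).choose k : ℝ) * (f k - f (k+1))
      = (∑ k ∈ Finset.range (m+2), a k * f k) - ∑ k ∈ Finset.range (m+2), a k * f (k+1) := by
    rw [← Finset.sum_sub_distrib]
    exact Finset.sum_congr rfl fun k _ => by simp only [ha]; ring
  have hA : ∑ k ∈ Finset.range (m+2), a k * f k
      = f 0 - ∑ k ∈ Finset.range (m+1), (-1:ℝ)^k * ((m+1).choose (k+1) : ℝ) * f (k+1) := by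
    rw [Finset.sum_range_succ' (fun k => a k * f k) (m+1)]
    have h1 : ∀ k ∈ Finset.range (m+1), a (k+1) * f (k+1)
        = -((-1:ℝ)^k * ((m+1).choose (k+1) : ℝ) * f (k+1)) := by
      intro k _
      simp only [ha, pow_succ]
      ring
    rw [Finset.sum_congr rfl h1, Finset.sum_neg_distrib]
    simp only [ha, pow_zero, Nat.choose_zero_right, Nat.cast_one]
    ring
  have hRHS : ∑ k ∈ Finset.range (m+3), (-1:ℝ)^k * ((m+2).choose k : ℝ) * f k
      = f 0 - (∑ k ∈ Finset.range (m+2), a k * f (k+1))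
          - ∑ k ∈ Finset.range (m+2), (-1:ℝ)^k * ((m+1).choose (k+1) : ℝ) * f (k+1) := by
    rw [Finset.sum_range_succ' (fun k => (-1:ℝ)^k * ((m+2).choose k : ℝ) * f k) (m+2)]
    have h1 : ∀ k ∈ Finset.range (m+2), (-1:ℝ)^(k+1) * ((m+2).choose (k+1) : ℝ) * f (k+1)
        = -(a k * f (k+1)) - (-1:ℝ)^k * ((m+1).choose (k+1) : ℝ) * f (k+1) := by
      intro k _
      have hp : ((m+2).choose (k+1) : ℝ) = ((m+1).choose k : ℝ) + ((m+1).choose (k+1) : ℝ) := by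
        rw [show m+2 = (m+1)+1 from rfl, Nat.choose_succ_succ]
        push_cast; ring
      rw [hp]
      simp only [ha, pow_succ]
      ring
    rw [Finset.sum_congr rfl h1]
    rw [Finset.sum_sub_distrib, Finset.sum_neg_distrib]
    simp only [pow_zero, Nat.choose_zero_right, Nat.cast_one]
    ring
  have hD : ∑ k ∈ Finset.range (m+2), (-1:ℝ)^k * ((m+1).choose (k+1) : ℝ) * f (k+1)
      = ∑ k ∈ Finset.range (m+1), (-1:ℝ)^k * ((m+1).choose (k+1) : ℝ) * f (k+1) := by
    rw [Finset.sum_range_succ]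
    rw [show m+1+1 = m+2 from rfl, hc0]
    ring
  rw [hsplit, hA, hRHS, hD]
  ring

theorem bspline_eq_sum (n : ℕ) (x : ℝ) :
    bspline n x = ((n.factorial : ℝ))⁻¹ *
      ∑ k ∈ Finset.range (n + 2), (-1 : ℝ) ^ k * ((n+1).choose k : ℝ) * rho n (x - k) := by
  induction n generalizing x with
  | zero =>
    by_cases h0 : (0:ℝ) ≤ x
    · by_cases h1 : x < 1
      · have hx1 : ¬ (0 ≤ x - 1) := by linarith
        simp [bspline, Finset.sum_range_succ, rho, Set.mem_Ico, h0, h1, hx1]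
      · have hx1 : (0:ℝ) ≤ x - 1 := by linarith
        simp [bspline, Finset.sum_range_succ, rho, Set.mem_Ico, h0, h1, hx1,
          show (1:ℝ) ≤ x by linarith]
    · have hx1 : ¬ (0 ≤ x - 1) := by linarith
      simp [bspline, Finset.sum_range_succ, rho, Set.mem_Ico, h0, hx1,
        show ¬ (1:ℝ) ≤ x by linarith]
  | succ n ih =>
    have hstep : bspline (n+1) x = ∫ t in (x-1)..x, bspline n t := by
      show (∫ t : ℝ, bspline n t * (if (x - t) ∈ Set.Ico (0:ℝ) 1 then 1 else 0)) = _
      have hind : ∀ t : ℝ, bspline n t * (if (x - t) ∈ Set.Ico (0:ℝ) 1 then 1 else 0)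
          = Set.indicator (Set.Ioc (x-1) x) (bspline n) t := by
        intro t
        by_cases ht : t ∈ Set.Ioc (x-1) x
        · rw [Set.indicator_of_mem ht]
          obtain ⟨h1, h2⟩ := ht
          rw [if_pos ⟨by linarith, by linarith⟩, mul_one]
        · rw [Set.indicator_of_notMem ht, if_neg, mul_zero]
          rintro ⟨h1, h2⟩
          exact ht ⟨by linarith, by linarith⟩
      simp_rw [hind]
      rw [MeasureTheory.integral_indicator measurableSet_Ioc,
          intervalIntegral.integral_of_le (by linarith : x - 1 ≤ x)]
    rw [hstep]
    rw [intervalIntegral.integral_congr (fun t _ => ih t)]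
    rw [intervalIntegral.integral_const_mul]
    have hintk : ∀ k : ℕ, IntervalIntegrable
        (fun t => (-1:ℝ)^k * ((n+1).choose k : ℝ) * rho n (t - k)) volume (x-1) x := by
      intro k
      have hm : Monotone (fun t : ℝ => rho n (t - (k:ℝ))) :=
        (monotone_rho n).comp (fun u v h => sub_le_sub_right h _)
      exact hm.intervalIntegrable.const_mul _
    rw [intervalIntegral.integral_finset_sum (fun k _ => hintk k)]
    have hval : ∀ k ∈ Finset.range (n+2),
        (∫ t in (x-1)..x, (-1:ℝ)^k * ((n+1).choose k : ℝ) * rho n (t - k))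
        = (-1:ℝ)^k * ((n+1).choose k : ℝ) *
            (((fun j : ℕ => rho (n+1) (x - j)) k - (fun j : ℕ => rho (n+1) (x - j)) (k+1)) / ((n:ℝ)+1)) := by
      intro k _
      rw [intervalIntegral.integral_const_mul, integral_rho n k (x-1) x (by linarith)]
      dsimp only
      have h1 : (x - 1) - (k:ℝ) = x - ((k+1 : ℕ) : ℝ) := by push_cast; ring
      rw [h1]
    rw [Finset.sum_congr rfl hval]
    have h2 : ∑ k ∈ Finset.range (n+2), (-1:ℝ)^k * ((n+1).choose k : ℝ) *
        (((fun j : ℕ => rho (n+1) (x - j)) k - (fun j : ℕ => rho (n+1) (x - j)) (k+1)) / ((n:ℝ)+1))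
        = ((n:ℝ)+1)⁻¹ * ∑ k ∈ Finset.range (n+2), (-1:ℝ)^k * ((n+1).choose k : ℝ) *
            ((fun j : ℕ => rho (n+1) (x - j)) k - (fun j : ℕ => rho (n+1) (x - j)) (k+1)) := by
      rw [Finset.mul_sum]
      exact Finset.sum_congr rfl fun k _ => by ring
    rw [h2, sum_pascal n (fun j => rho (n+1) (x - j))]
    rw [show n+1+2 = n+3 from rfl, show n+1+1 = n+2 from rfl]
    rw [Nat.factorial_succ, Nat.cast_mul, mul_inv]
    push_cast
    ring
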